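/- Fix ω > 0, α > 0, and let Z, Z' be bounded positive random variables with E[Z^{α/2}] ≤ E[Z'^{α/2}]. Define P(ρ) = E[1 − e^{−ωZ^{α/2}/ρ}] and P'(ρ) = E[1 − e^{−ωZ'^{α/2}/ρ}]. Then ρ·(P'(ρ) − P(ρ)) → ω(E[Z'^{α/2}] − E[Z^{α/2}]) as ρ → ∞; in particular P'(ρ) − P(ρ) → 0, and both systems have the same diversity order 1 (assuming E[Z^{α/2}] > 0). -/

import Mathlib

open MeasureTheory Set Real Filter

lemma aux_pt (a : ℝ) (ha : 0 < a) :
    Tendsto (fun ρ : ℝ => ρ * (1 - Real.exp (-(a / ρ)))) atTop (nhds a) := by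
  have hder : HasDerivAt (fun t : ℝ => 1 - Real.exp (-t)) 1 0 := by
    have h : HasDerivAt (fun t : ℝ => Real.exp (-t)) (-1) 0 := by
      simpa [Function.comp_def] using ((Real.hasDerivAt_exp (-0)).comp 0 (hasDerivAt_neg 0))
    have h2 := (hasDerivAt_const (0:ℝ) (1:ℝ)).sub h
    simpa [Pi.sub_def] using h2
  have hslope : Tendsto (fun t : ℝ => (1 - Real.exp (-t)) / t) (nhdsWithin 0 {(0:ℝ)}ᶜ) (nhds 1) := by
    have := hder.hasDerivWithinAt (s := {(0:ℝ)}ᶜ)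
    rw [hasDerivWithinAt_iff_tendsto_slope] at this
    refine (this.mono_left (nhdsWithin_mono _ fun x hx => ⟨hx, hx⟩)).congr fun t => ?_
    simp [slope_def_field]
  have hcomp : Tendsto (fun ρ : ℝ => a / ρ) atTop (nhdsWithin 0 {(0:ℝ)}ᶜ) := by
    apply tendsto_nhdsWithin_of_tendsto_nhds_of_eventually_within
    · simpa using tendsto_const_nhds.div_atTop tendsto_id
    · filter_upwards [eventually_gt_atTop 0] with ρ hρ
      simp [div_ne_zero ha.ne' hρ.ne']
  have := (hslope.comp hcomp).const_mul a
  rw [mul_one] at this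
  refine this.congr' ?_
  filter_upwards [eventually_gt_atTop 0] with ρ hρ
  simp only [Function.comp_apply]
  field_simp

lemma key {Ω : Type*} [MeasurableSpace Ω] (μ : Measure Ω) [IsProbabilityMeasure μ]
    (Y : Ω → ℝ) (hY : Measurable Y) (hpos : ∀ᵐ x ∂μ, 0 < Y x) (M : ℝ)
    (hbdd : ∀ᵐ x ∂μ, Y x ≤ M) (w : ℝ) (hw : 0 < w) :
    Tendsto (fun ρ : ℝ => ρ * ∫ x, (1 - Real.exp (-(w * Y x / ρ))) ∂μ) atTop
      (nhds (w * ∫ x, Y x ∂μ)) := by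
  have heq : ∀ ρ : ℝ, ρ * ∫ x, (1 - Real.exp (-(w * Y x / ρ))) ∂μ
      = ∫ x, ρ * (1 - Real.exp (-(w * Y x / ρ))) ∂μ := by
    intro ρ; rw [integral_const_mul]
  simp_rw [heq]
  rw [← integral_const_mul]
  apply tendsto_integral_filter_of_dominated_convergence (fun _ => w * M)
  · filter_upwards with ρ
    exact ((measurable_const.sub (((hY.const_mul w).div_const ρ).neg.exp)).const_mul ρ).aestronglyMeasurable
  · filter_upwards [eventually_gt_atTop 0] with ρ hρ
    filter_upwards [hpos, hbdd] with x hx hxM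
    have ht : 0 ≤ w * Y x / ρ := by positivity
    have h1 : Real.exp (-(w * Y x / ρ)) ≤ 1 := Real.exp_le_one_iff.mpr (by linarith)
    have h2 : 1 - (w * Y x / ρ) ≤ Real.exp (-(w * Y x / ρ)) := by
      have := Real.add_one_le_exp (-(w * Y x / ρ)); linarith
    have hnn : 0 ≤ ρ * (1 - Real.exp (-(w * Y x / ρ))) := by
      apply mul_nonneg hρ.le; linarith
    rw [Real.norm_eq_abs, abs_of_nonneg hnn]
    have : ρ * (1 - Real.exp (-(w * Y x / ρ))) ≤ ρ * (w * Y x / ρ) := by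
      apply mul_le_mul_of_nonneg_left (by linarith) hρ.le
    rw [mul_div_cancel₀ _ hρ.ne'] at this
    have : ρ * (1 - Real.exp (-(w * Y x / ρ))) ≤ w * Y x := this
    nlinarith
  · exact integrable_const _
  · filter_upwards [hpos] with x hx
    exact aux_pt (w * Y x) (by positivity)

lemma div_lemma (f : ℝ → ℝ) (L : ℝ) (hL : 0 < L)
    (h : Tendsto (fun ρ => ρ * f ρ) atTop (nhds L)) :
    Tendsto (fun ρ => -Real.log (f ρ) / Real.log ρ) atTop (nhds 1) := by
  have h1 : Tendsto (fun ρ => Real.log (ρ * f ρ)) atTop (nhds (Real.log L)) :=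
    (Real.continuousAt_log hL.ne').tendsto.comp h
  have h2 : Tendsto (fun ρ => Real.log (ρ * f ρ) / Real.log ρ) atTop (nhds 0) :=
    h1.div_atTop Real.tendsto_log_atTop
  have h3 : Tendsto (fun ρ => 1 - Real.log (ρ * f ρ) / Real.log ρ) atTop (nhds 1) := by
    simpa using (tendsto_const_nhds (x := (1:ℝ)) (f := atTop)).sub h2
  refine h3.congr' ?_
  have hev : ∀ᶠ ρ : ℝ in atTop, 0 < ρ * f ρ := h.eventually (eventually_gt_nhds hL)
  filter_upwards [hev, eventually_gt_atTop 1] with ρ hρf hρ1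
  have hρ0 : (0:ℝ) < ρ := lt_trans one_pos hρ1
  have hf : 0 < f ρ := by nlinarith
  have hlog : Real.log (ρ * f ρ) = Real.log ρ + Real.log (f ρ) := Real.log_mul hρ0.ne' hf.ne'
  have hlρ : 0 < Real.log ρ := Real.log_pos hρ1
  rw [hlog]
  field_simp
  ring

theorem stmt_18 {Ω : Type*} [MeasurableSpace Ω] (μ : Measure Ω) [IsProbabilityMeasure μ]
    (Z Z' : Ω → ℝ) (hZ : Measurable Z) (hZ' : Measurable Z')
    (hZpos : ∀ᵐ x ∂μ, 0 < Z x) (hZ'pos : ∀ᵐ x ∂μ, 0 < Z' x)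
    (C : ℝ) (hZbdd : ∀ᵐ x ∂μ, Z x ≤ C) (hZ'bdd : ∀ᵐ x ∂μ, Z' x ≤ C)
    (w α : ℝ) (hw : 0 < w) (hα : 0 < α)
    (hE : ∫ x, Z x ^ (α / 2) ∂μ ≤ ∫ x, Z' x ^ (α / 2) ∂μ)
    (hE0 : 0 < ∫ x, Z x ^ (α / 2) ∂μ) :
    let P : ℝ → ℝ := fun ρ => ∫ x, (1 - Real.exp (-(w * Z x ^ (α / 2) / ρ))) ∂μ
    let P' : ℝ → ℝ := fun ρ => ∫ x, (1 - Real.exp (-(w * Z' x ^ (α / 2) / ρ))) ∂μ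
    Tendsto (fun ρ => ρ * (P' ρ - P ρ)) atTop
      (nhds (w * ((∫ x, Z' x ^ (α / 2) ∂μ) - ∫ x, Z x ^ (α / 2) ∂μ))) ∧
    Tendsto (fun ρ => P' ρ - P ρ) atTop (nhds 0) ∧
    Tendsto (fun ρ => -Real.log (P ρ) / Real.log ρ) atTop (nhds 1) ∧
    Tendsto (fun ρ => -Real.log (P' ρ) / Real.log ρ) atTop (nhds 1) := by
  intro P P'
  have hYm : Measurable (fun x => Z x ^ (α / 2)) := ((Real.continuous_rpow_const (by positivity : (0:ℝ) ≤ α / 2)).measurable.comp hZ)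
  have hYm' : Measurable (fun x => Z' x ^ (α / 2)) := ((Real.continuous_rpow_const (by positivity : (0:ℝ) ≤ α / 2)).measurable.comp hZ')
  have hYpos : ∀ᵐ x ∂μ, 0 < Z x ^ (α / 2) :=
    hZpos.mono fun x hx => Real.rpow_pos_of_pos hx _
  have hYpos' : ∀ᵐ x ∂μ, 0 < Z' x ^ (α / 2) :=
    hZ'pos.mono fun x hx => Real.rpow_pos_of_pos hx _
  have hYbdd : ∀ᵐ x ∂μ, Z x ^ (α / 2) ≤ C ^ (α / 2) := by
    filter_upwards [hZpos, hZbdd] with x h1 h2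
    exact Real.rpow_le_rpow h1.le h2 (by positivity)
  have hYbdd' : ∀ᵐ x ∂μ, Z' x ^ (α / 2) ≤ C ^ (α / 2) := by
    filter_upwards [hZ'pos, hZ'bdd] with x h1 h2
    exact Real.rpow_le_rpow h1.le h2 (by positivity)
  have k1 : Tendsto (fun ρ : ℝ => ρ * P ρ) atTop (nhds (w * ∫ x, Z x ^ (α / 2) ∂μ)) :=
    key μ _ hYm hYpos _ hYbdd w hw
  have k2 : Tendsto (fun ρ : ℝ => ρ * P' ρ) atTop (nhds (w * ∫ x, Z' x ^ (α / 2) ∂μ)) :=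
    key μ _ hYm' hYpos' _ hYbdd' w hw
  have part1 : Tendsto (fun ρ => ρ * (P' ρ - P ρ)) atTop
      (nhds (w * ((∫ x, Z' x ^ (α / 2) ∂μ) - ∫ x, Z x ^ (α / 2) ∂μ))) := by
    have := k2.sub k1
    simp only [mul_sub] at this ⊢
    exact this
  refine ⟨part1, ?_, div_lemma P _ (by positivity) k1,
    div_lemma P' _ (mul_pos hw (lt_of_lt_of_le hE0 hE)) k2⟩
  have h0 : Tendsto (fun ρ : ℝ => (ρ * (P' ρ - P ρ)) * ρ⁻¹) atTop (nhds 0) := by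
    simpa using part1.mul tendsto_inv_atTop_zero
  refine h0.congr' ?_
  filter_upwards [eventually_gt_atTop 0] with ρ hρ
  field_simp
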